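/- Let W be a real inner product space and let φ, ψ : W → ℝ be differentiable functions such that φ has L-Lipschitz gradient (L ≥ 0) and both gradients are uniformly bounded: ‖∇φ(w)‖ ≤ B and ‖∇ψ(w)‖ ≤ B for all w ∈ W, where B = μ·σ·σ′. Let α ≥ 0 and suppose w⁺ = w − α·∇ψ(w). Then φ(w⁺) − φ(w) ≤ ((L·α²)/2 − α)·‖∇ψ(w)‖² + 2·α·μ²·σ²·σ′². -/

import Mathlib

open RealInnerProductSpace

lemma descent_lemma
    {W : Type*} [NormedAddCommGroup W] [InnerProductSpace ℝ W]
    (φ : W → ℝ) (φ' : W → W) (L : ℝ) (hL : 0 ≤ L)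
    (hφdiff : ∀ w, HasFDerivAt φ (innerSL ℝ (φ' w)) w)
    (hφlip : ∀ w₁ w₂, ‖φ' w₁ - φ' w₂‖ ≤ L * ‖w₁ - w₂‖)
    (x y : W) :
    φ y - φ x ≤ ⟪φ' x, y - x⟫ + L / 2 * ‖y - x‖ ^ 2 := by
  set d := y - x with hd
  have hφcont : Continuous φ' :=
    (LipschitzWith.of_dist_le_mul (K := ⟨L, hL⟩) (fun a b => by
      rw [dist_eq_norm, dist_eq_norm]; exact hφlip a b)).continuous
  have key : ∀ t ∈ Set.uIcc (0:ℝ) 1,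
      HasDerivAt (fun t : ℝ => φ (x + t • d)) ⟪φ' (x + t • d), d⟫ t := by
    intro t _
    have h1 : HasDerivAt (fun t : ℝ => x + t • d) d t := by
      simpa using ((hasDerivAt_id t).smul_const d).const_add x
    have h2 := (hφdiff (x + t • d)).comp_hasDerivAt t h1
    exact h2
  have hcont : Continuous fun t : ℝ => ⟪φ' (x + t • d), d⟫ := by
    exact (hφcont.comp (by continuity)).inner continuous_const
  have hint : IntervalIntegrable (fun t : ℝ => ⟪φ' (x + t • d), d⟫)
      MeasureTheory.volume 0 1 := hcont.intervalIntegrable 0 1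
  have heq : ∫ t in (0:ℝ)..1, ⟪φ' (x + t • d), d⟫ = φ y - φ x := by
    rw [intervalIntegral.integral_eq_sub_of_hasDerivAt key hint]
    simp [hd]
  have hbound : ∀ t ∈ Set.Icc (0:ℝ) 1,
      ⟪φ' (x + t • d), d⟫ ≤ ⟪φ' x, d⟫ + L * t * ‖d‖ ^ 2 := by
    intro t ht
    have : ⟪φ' (x + t • d) - φ' x, d⟫ ≤ L * t * ‖d‖ ^ 2 := by
      calc ⟪φ' (x + t • d) - φ' x, d⟫ ≤ ‖φ' (x + t • d) - φ' x‖ * ‖d‖ :=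
            real_inner_le_norm _ _
        _ ≤ (L * ‖x + t • d - x‖) * ‖d‖ := by
            gcongr; exact hφlip _ _
        _ = L * t * ‖d‖ ^ 2 := by
            rw [add_sub_cancel_left, norm_smul, Real.norm_eq_abs, abs_of_nonneg ht.1]
            ring
    have h2 : ⟪φ' (x + t • d) - φ' x, d⟫ = ⟪φ' (x + t • d), d⟫ - ⟪φ' x, d⟫ := by
      rw [inner_sub_left]
    linarith [this, h2.symm.le]
  have hmono : ∫ t in (0:ℝ)..1, ⟪φ' (x + t • d), d⟫
      ≤ ∫ t in (0:ℝ)..1, (⟪φ' x, d⟫ + L * t * ‖d‖ ^ 2) := by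
    apply intervalIntegral.integral_mono_on (by norm_num) hint
    · exact (Continuous.intervalIntegrable (by continuity) 0 1)
    · exact hbound
  have hval : ∫ t in (0:ℝ)..1, (⟪φ' x, d⟫ + L * t * ‖d‖ ^ 2)
      = ⟪φ' x, d⟫ + L / 2 * ‖d‖ ^ 2 := by
    rw [intervalIntegral.integral_add (intervalIntegrable_const)
      (Continuous.intervalIntegrable (by continuity) 0 1),
      show (fun t : ℝ => L * t * ‖d‖ ^ 2) = fun t : ℝ => (L * ‖d‖ ^ 2) * t by ext t; ring,
      intervalIntegral.integral_const_mul, integral_id, intervalIntegral.integral_const]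
    norm_num
    ring
  rw [heq, hval] at hmono
  linarith

/-- Eqn. (31) in the proof of Theorem 2: if `φ` has an `L`-Lipschitz gradient `φ'`,
both `‖φ' w‖ ≤ B` and `‖ψ' w‖ ≤ B` with `B = μ * σ * σ'`, and
`w⁺ = w - α • ψ' w`, then
`φ w⁺ - φ w ≤ (L α² / 2 - α) ‖ψ' w‖² + 2 α μ² σ² σ'²`. -/
theorem outer_update_bound
    {W : Type*} [NormedAddCommGroup W] [InnerProductSpace ℝ W]
    (φ ψ : W → ℝ) (φ' ψ' : W → W) (L : ℝ) (hL : 0 ≤ L)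
    (hφdiff : ∀ w, HasFDerivAt φ (innerSL ℝ (φ' w)) w)
    (hψdiff : ∀ w, HasFDerivAt ψ (innerSL ℝ (ψ' w)) w)
    (hφlip : ∀ w₁ w₂, ‖φ' w₁ - φ' w₂‖ ≤ L * ‖w₁ - w₂‖)
    (μ σ σ' B : ℝ) (hB : B = μ * σ * σ')
    (hφbound : ∀ w, ‖φ' w‖ ≤ B)
    (hψbound : ∀ w, ‖ψ' w‖ ≤ B)
    (α : ℝ) (hα : 0 ≤ α)
    (w wplus : W) (hwplus : wplus = w - α • ψ' w) :
    φ wplus - φ w ≤ (L * α ^ 2 / 2 - α) * ‖ψ' w‖ ^ 2 + 2 * α * μ ^ 2 * σ ^ 2 * σ' ^ 2 := by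
  have hdesc := descent_lemma φ φ' L hL hφdiff hφlip w wplus
  have hdiff : wplus - w = -(α • ψ' w) := by rw [hwplus]; abel
  have hnormsq : ‖wplus - w‖ ^ 2 = α ^ 2 * ‖ψ' w‖ ^ 2 := by
    rw [hdiff, norm_neg, norm_smul, Real.norm_eq_abs, abs_of_nonneg hα, mul_pow]
  have hinner : ⟪φ' w, wplus - w⟫ = -α * ⟪φ' w, ψ' w⟫ := by
    rw [hdiff, inner_neg_right, real_inner_smul_right]; ring
  have hsplit : ⟪φ' w, ψ' w⟫ = ⟪ψ' w, ψ' w⟫ - ⟪ψ' w - φ' w, ψ' w⟫ := by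
    rw [inner_sub_left]; ring
  have hB0 : 0 ≤ B := le_trans (norm_nonneg _) (hψbound w)
  have hcs : ⟪ψ' w - φ' w, ψ' w⟫ ≤ 2 * B ^ 2 := by
    calc ⟪ψ' w - φ' w, ψ' w⟫ ≤ ‖ψ' w - φ' w‖ * ‖ψ' w‖ := real_inner_le_norm _ _
      _ ≤ (B + B) * B := by
          gcongr
          · exact le_trans (norm_sub_le _ _) (add_le_add (hψbound w) (hφbound w))
          · exact hψbound w
      _ = 2 * B ^ 2 := by ring
  have hself : ⟪ψ' w, ψ' w⟫ = ‖ψ' w‖ ^ 2 := real_inner_self_eq_norm_sq _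
  have hB2 : B ^ 2 = μ ^ 2 * σ ^ 2 * σ' ^ 2 := by rw [hB]; ring
  have : -α * ⟪φ' w, ψ' w⟫ ≤ -α * ‖ψ' w‖ ^ 2 + 2 * α * B ^ 2 := by
    rw [hsplit, hself]
    have := mul_le_mul_of_nonneg_left hcs hα
    nlinarith
  nlinarith [hdesc, hnormsq, hinner, hB2]
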